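/- Let g be an n-dimensional non-model filiform Lie algebra with invariant z_2. Then z_2 ≤ n − 1, and z_2 = n − 1 if and only if g is metabelian (i.e. D^2 g = 0). -/

import Mathlib

/-- A complex Lie algebra `L` of dimension `n` is filiform if its lower central series
`C^1 g = g`, `C^k g = ⁅C^{k-1} g, g⁆` (here `C^k g = LieModule.lowerCentralSeries ℂ L L (k-1)`)
satisfies `dim C^k g = n - k` for all `2 ≤ k ≤ n`. -/
def IsFiliform (L : Type*) [LieRing L] [LieAlgebra ℂ L] (n : ℕ) : Prop :=
  Module.finrank ℂ L = n ∧
    ∀ k : ℕ, 2 ≤ k → k ≤ n →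
      Module.finrank ℂ (LieModule.lowerCentralSeries ℂ L L (k - 1)) = n - k

/-- An adapted basis `e_1, …, e_n` of an `n`-dimensional filiform Lie algebra:
`⁅e_1, e_h⁆ = e_{h-1}` for `3 ≤ h ≤ n`, `⁅e_2, e_h⁆ = 0` for `1 ≤ h ≤ n`, and
`⁅e_3, e_h⁆ = 0` for `2 ≤ h ≤ n`.  The family `e` is indexed by `ℕ`, with
`e 1, …, e n` the members of the basis `b`. -/
structure AdaptedBasis (n : ℕ) (L : Type*) [LieRing L] [LieAlgebra ℂ L] where
  b : Module.Basis (Fin n) ℂ L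
  e : ℕ → L
  he : ∀ i : Fin n, e (i.1 + 1) = b i
  adapted1 : ∀ h, 3 ≤ h → h ≤ n → ⁅e 1, e h⁆ = e (h - 1)
  adapted2 : ∀ h, 1 ≤ h → h ≤ n → ⁅e 2, e h⁆ = 0
  adapted3 : ∀ h, 2 ≤ h → h ≤ n → ⁅e 3, e h⁆ = 0

/-- Key lemma: if all adjacent brackets vanish below `m`, all brackets with indices in
`[2, m]` vanish. -/
lemma key_lemma {n : ℕ} {L : Type*} [LieRing L] [LieAlgebra ℂ L]
    (B : AdaptedBasis n L) (m : ℕ) (hm : m ≤ n)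
    (h0 : ∀ k, 4 ≤ k → k + 1 ≤ m → ⁅B.e k, B.e (k + 1)⁆ = 0) :
    ∀ d i j, 2 ≤ i → j ≤ m → j = i + d → ⁅B.e i, B.e j⁆ = 0 := by
  intro d
  induction d using Nat.strong_induction_on with
  | _ d ih =>
    intro i j hi hj hij
    rcases Nat.lt_or_ge d 2 with hd | hd
    · interval_cases d
      · subst hij; exact lie_self _
      · rcases Nat.lt_or_ge i 4 with hi4 | hi4
        · interval_cases i
          · exact B.adapted2 j (by omega) (by omega)
          · exact B.adapted3 j (by omega) (by omega)
        · subst hij; exact h0 i hi4 (by omega)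
    · rcases Nat.lt_or_ge i 4 with hi4 | hi4
      · interval_cases i
        · exact B.adapted2 j (by omega) (by omega)
        · exact B.adapted3 j (by omega) (by omega)
      · have hA : ⁅B.e 1, B.e (i + 1)⁆ = B.e i := by
          have := B.adapted1 (i + 1) (by omega) (by omega)
          simpa using this
        have hB : ⁅B.e 1, B.e j⁆ = B.e (j - 1) := B.adapted1 j (by omega) (by omega)
        have hC : ⁅B.e (i + 1), B.e j⁆ = 0 :=
          ih (d - 1) (by omega) (i + 1) j (by omega) hj (by omega)
        have hD : ⁅B.e (i + 1), B.e (j - 1)⁆ = 0 :=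
          ih (d - 2) (by omega) (i + 1) (j - 1) (by omega) (by omega) (by omega)
        have hJ := leibniz_lie (B.e 1) (B.e (i + 1)) (B.e j)
        rw [hA, hB, hC, hD, lie_zero, add_zero] at hJ
        exact hJ.symm

/-- For an `n`-dimensional non-model filiform Lie algebra with adapted basis `e_1, …, e_n`
and invariant `z_2 = min {k ≥ 4 : ⁅e_k, e_{k+1}⁆ ≠ 0}`, one has `z_2 ≤ n - 1`, and
`z_2 = n - 1` if and only if `g` is metabelian, i.e. `D^2 g = 0`. -/
theorem z2_le_and_metabelian_iff
    (n : ℕ) (L : Type*) [LieRing L] [LieAlgebra ℂ L]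
    (hfil : IsFiliform L n) (B : AdaptedBasis n L)
    (hnonmodel : ∃ i j, 2 ≤ i ∧ i < j ∧ j ≤ n ∧ ⁅B.e i, B.e j⁆ ≠ 0) :
    sInf {k | 4 ≤ k ∧ ⁅B.e k, B.e (k + 1)⁆ ≠ 0} ≤ n - 1 ∧
    (sInf {k | 4 ≤ k ∧ ⁅B.e k, B.e (k + 1)⁆ ≠ 0} = n - 1 ↔
      LieAlgebra.derivedSeries ℂ L 2 = ⊥) := by
  classical
  obtain ⟨i₀, j₀, hi₀, hij₀, hj₀, hne₀⟩ := hnonmodel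
  have : FiniteDimensional ℂ L := Module.Finite.of_basis B.b
  -- i₀ ≥ 4, hence n ≥ 5
  have hi04 : 4 ≤ i₀ := by
    by_contra h
    interval_cases i₀
    · exact hne₀ (B.adapted2 j₀ (by omega) hj₀)
    · exact hne₀ (B.adapted3 j₀ (by omega) hj₀)
  have hn5 : 5 ≤ n := by omega
  set S : Set ℕ := {k | 4 ≤ k ∧ ⁅B.e k, B.e (k + 1)⁆ ≠ 0} with hS
  -- there is a small element of S
  have hexists : ∃ k, 4 ≤ k ∧ k ≤ n - 1 ∧ ⁅B.e k, B.e (k + 1)⁆ ≠ 0 := by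
    by_contra hc
    push_neg at hc
    exact hne₀ (key_lemma B n le_rfl (fun k h4 hk1 => hc k h4 (by omega))
      (j₀ - i₀) i₀ j₀ hi₀ hj₀ (by omega))
  obtain ⟨k₀, hk₀4, hk₀n, hk₀ne⟩ := hexists
  have hk₀S : k₀ ∈ S := ⟨hk₀4, hk₀ne⟩
  have hpart1 : sInf S ≤ n - 1 := le_trans (Nat.sInf_le hk₀S) hk₀n
  -- derived series facts
  have hDS1 : LieAlgebra.derivedSeries ℂ L 1 = LieModule.lowerCentralSeries ℂ L L 1 := by
    rw [LieAlgebra.derivedSeries_def, LieAlgebra.derivedSeriesOfIdeal_succ,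
      LieAlgebra.derivedSeriesOfIdeal_zero, LieModule.lowerCentralSeries_succ,
      LieModule.lowerCentralSeries_zero]
  have hmemD1 : ∀ i : ℕ, 2 ≤ i → i ≤ n - 1 → B.e i ∈ LieAlgebra.derivedSeries ℂ L 1 := by
    intro i h2 hn1
    have h1 : ⁅B.e 1, B.e (i + 1)⁆ = B.e i := by
      have := B.adapted1 (i + 1) (by omega) (by omega)
      simpa using this
    rw [← h1]
    exact LieSubmodule.lie_mem_lie (LieSubmodule.mem_top _) (LieSubmodule.mem_top _)
  constructor
  · exact hpart1
  constructor
  · -- z2 = n-1 → metabelian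
    intro hz
    have hlow : ∀ k, 4 ≤ k → k + 1 ≤ n - 1 → ⁅B.e k, B.e (k + 1)⁆ = 0 := by
      intro k hk hk'
      by_contra hne
      have hkS : k ∈ S := ⟨hk, hne⟩
      have := Nat.sInf_le hkS
      omega
    have hmeta : ∀ i j, 2 ≤ i → 2 ≤ j → i ≤ n - 1 → j ≤ n - 1 → ⁅B.e i, B.e j⁆ = 0 := by
      intro i j h2i h2j hin hjn
      rcases le_total i j with h | h
      · exact key_lemma B (n - 1) (by omega) hlow (j - i) i j h2i hjn (by omega)
      · rw [← lie_skew, key_lemma B (n - 1) (by omega) hlow (i - j) j i h2j hin (by omega),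
          neg_zero]
    -- span characterization of D¹
    set p : Submodule ℂ L := Submodule.span ℂ (Set.range fun i : Fin (n - 2) => B.e (i.1 + 2))
      with hp
    have hbe : ∀ i : Fin (n - 2), B.e (i.1 + 2) = B.b ⟨i.1 + 1, by omega⟩ := by
      intro i
      exact B.he ⟨i.1 + 1, by omega⟩
    have hli : LinearIndependent ℂ (fun i : Fin (n - 2) => B.e (i.1 + 2)) := by
      have : (fun i : Fin (n - 2) => B.e (i.1 + 2)) =
          B.b ∘ (fun i : Fin (n - 2) => (⟨i.1 + 1, by omega⟩ : Fin n)) := by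
        funext i; exact hbe i
      rw [this]
      exact B.b.linearIndependent.comp _ (fun a b hab => by
        simpa [Fin.ext_iff] using hab)
    have hfp : Module.finrank ℂ p = n - 2 := by
      rw [hp, finrank_span_eq_card hli]
      simp
    have hfD : Module.finrank ℂ (LieAlgebra.derivedSeries ℂ L 1) = n - 2 := by
      rw [hDS1]
      have := hfil.2 2 le_rfl (by omega)
      simpa using this
    have hple : p ≤ (LieAlgebra.derivedSeries ℂ L 1 : LieIdeal ℂ L).toSubmodule := by
      rw [hp, Submodule.span_le]
      rintro x ⟨i, rfl⟩
      exact hmemD1 (i.1 + 2) (by omega) (by omega)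
    have hpeq : p = (LieAlgebra.derivedSeries ℂ L 1 : LieIdeal ℂ L).toSubmodule := by
      apply Submodule.eq_of_le_of_finrank_le hple
      rw [hfp]
      exact le_of_eq hfD
    have hbrk : ∀ x ∈ p, ∀ y ∈ p, ⁅x, y⁆ = 0 := by
      intro x hx
      induction hx using Submodule.span_induction with
      | mem x hxm =>
        obtain ⟨i, rfl⟩ := hxm
        intro y hy
        induction hy using Submodule.span_induction with
        | mem y hym =>
          obtain ⟨j, rfl⟩ := hym
          exact hmeta (i.1 + 2) (j.1 + 2) (by omega) (by omega) (by omega) (by omega)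
        | zero => simp
        | add a b _ _ ha hb => rw [lie_add, ha, hb, add_zero]
        | smul c a _ ha => rw [lie_smul, ha, smul_zero]
      | zero => intro y hy; simp
      | add a b _ _ ha hb => intro y hy; rw [add_lie, ha y hy, hb y hy, add_zero]
      | smul c a _ ha => intro y hy; rw [smul_lie, ha y hy, smul_zero]
    have : LieAlgebra.derivedSeries ℂ L 2 = ⊥ := by
      rw [show (2 : ℕ) = 1 + 1 from rfl, LieAlgebra.derivedSeries_def,
        LieAlgebra.derivedSeriesOfIdeal_succ, ← LieAlgebra.derivedSeries_def,
        LieSubmodule.lie_eq_bot_iff]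
      intro x hx m hm
      exact hbrk x (hpeq ▸ hx) m (hpeq ▸ hm)
    exact this
  · -- metabelian → z2 = n-1
    intro hmet
    have hmeta : ∀ i j, 2 ≤ i → 2 ≤ j → i ≤ n - 1 → j ≤ n - 1 → ⁅B.e i, B.e j⁆ = 0 := by
      intro i j h2i h2j hin hjn
      have hx := hmemD1 i h2i hin
      have hy := hmemD1 j h2j hjn
      have : ⁅B.e i, B.e j⁆ ∈ LieAlgebra.derivedSeries ℂ L 2 := by
        rw [show (2 : ℕ) = 1 + 1 from rfl, LieAlgebra.derivedSeries_def,
          LieAlgebra.derivedSeriesOfIdeal_succ, ← LieAlgebra.derivedSeries_def]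
        exact LieSubmodule.lie_mem_lie hx hy
      rw [hmet] at this
      simpa using this
    have htop : ⁅B.e (n - 1), B.e n⁆ ≠ 0 := by
      intro h
      apply hne₀
      apply key_lemma B n le_rfl ?_ (j₀ - i₀) i₀ j₀ hi₀ hj₀ (by omega)
      intro k h4 hk1
      rcases Nat.lt_or_ge k (n - 1) with hk | hk
      · exact hmeta k (k + 1) (by omega) (by omega) (by omega) (by omega)
      · have : k = n - 1 := by omega
        subst this
        rw [show n - 1 + 1 = n by omega]
        exact h
    have hmem : n - 1 ∈ S := by
      refine ⟨by omega, ?_⟩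
      rw [show n - 1 + 1 = n by omega]
      exact htop
    apply le_antisymm (Nat.sInf_le hmem)
    apply le_csInf ⟨n - 1, hmem⟩
    intro k hk
    obtain ⟨hk4, hkne⟩ := hk
    rcases Nat.lt_or_ge k (n - 1) with hkl | hkl
    · exact absurd (hmeta k (k + 1) (by omega) (by omega) (by omega) (by omega)) hkne
    · exact hkl
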